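/- The Prabhakar function satisfies the second reduction formula αγ z E_{α,β}^{γ+1}(z) = E_{α,β-α-1}^γ(z) + (1 - β + α) E_{α,β-α}^γ(z) for all z ≠ 0, where α > 0 and γ ≠ 0. -/

import Mathlib

open scoped BigOperators

/-- Pochhammer symbol `(γ)_k = γ(γ+1)⋯(γ+k-1)`. -/
noncomputable def poch (γ : ℝ) (k : ℕ) : ℝ := ∏ i ∈ Finset.range k, (γ + i)

/-- The Prabhakar (three-parameter Mittag-Leffler) function. -/
noncomputable def prabhakar (α β γ : ℝ) (z : ℂ) : ℂ :=
  ∑' k : ℕ, ((poch γ k / (Nat.factorial k * Real.Gamma (α * k + β)) : ℝ) : ℂ) * z ^ k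

open Real Filter

lemma gamma_ratio (α x : ℝ) (hα : 0 < α) (hx : 2 ≤ x) :
    Real.Gamma x * (x - 1) ^ α ≤ Real.Gamma (x + α) := by
  have hx1 : (1:ℝ) ≤ x - 1 := by linarith
  have hx1' : (0:ℝ) < x - 1 := by linarith
  have hGx : 0 < Real.Gamma x := Real.Gamma_pos_of_pos (by linarith)
  have hGx1 : 0 < Real.Gamma (x - 1) := Real.Gamma_pos_of_pos hx1'
  have hGxa : 0 < Real.Gamma (x + α) := Real.Gamma_pos_of_pos (by linarith)
  have hslope := Real.convexOn_log_Gamma.slope_mono_adjacent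
    (Set.mem_Ioi.2 hx1') (Set.mem_Ioi.2 (show (0:ℝ) < x + α by linarith))
    (show x - 1 < x by linarith) (show x < x + α by linarith)
  simp only [Function.comp] at hslope
  have hGrec : Real.Gamma x = (x - 1) * Real.Gamma (x - 1) := by
    have := Real.Gamma_add_one (ne_of_gt hx1')
    rw [sub_add_cancel] at this
    exact this
  have h1 : (Real.log (Real.Gamma x) - Real.log (Real.Gamma (x-1))) / (x - (x-1))
      = Real.log (x - 1) := by
    rw [hGrec, Real.log_mul (ne_of_gt hx1') (ne_of_gt hGx1)]
    ring
  rw [h1] at hslope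
  have h2 : α * Real.log (x - 1) + Real.log (Real.Gamma x) ≤ Real.log (Real.Gamma (x + α)) := by
    have h3 : (x + α) - x = α := by ring
    rw [h3, le_div_iff₀ hα] at hslope
    nlinarith [hslope]
  have := Real.exp_le_exp.2 h2
  rw [Real.exp_add, Real.exp_log hGxa, Real.exp_log hGx] at this
  calc Real.Gamma x * (x-1) ^ α = Real.exp (α * Real.log (x-1)) * Real.Gamma x := by
        rw [Real.rpow_def_of_pos hx1']; ring
    _ ≤ Real.Gamma (x + α) := this

lemma gamma_shift (x : ℝ) : 1 / Real.Gamma (x - 1) = (x - 1) / Real.Gamma x := by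
  rcases eq_or_ne (x - 1) 0 with h | h
  · rw [h, Real.Gamma_zero]; simp
  · have hG : Real.Gamma x = (x - 1) * Real.Gamma (x - 1) := by
      have := Real.Gamma_add_one h
      rwa [sub_add_cancel] at this
    rw [hG, show (x-1) / ((x-1) * Real.Gamma (x-1)) = ((x-1) * 1) / ((x-1) * Real.Gamma (x-1))
      from by rw [mul_one], mul_div_mul_left _ _ h]

lemma poch_succ' (γ : ℝ) (k : ℕ) : poch γ (k + 1) = poch (γ + 1) k * γ := by
  unfold poch
  rw [Finset.prod_range_succ']
  simp only [Nat.cast_add, Nat.cast_zero, add_zero]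
  congr 1
  apply Finset.prod_congr rfl
  intro i _
  push_cast
  ring

lemma summable_prab (α β γ : ℝ) (hα : 0 < α) (z : ℂ) :
    Summable (fun k : ℕ =>
      ((poch γ k / (Nat.factorial k * Real.Gamma (α * k + β)) : ℝ) : ℂ) * z ^ k) := by
  apply summable_of_ratio_norm_eventually_le (r := 1/2) (by norm_num)
  have hA : Tendsto (fun k : ℕ => α * k + β) atTop atTop := by
    apply tendsto_atTop_add_const_right
    exact (tendsto_natCast_atTop_atTop (R := ℝ)).const_mul_atTop hα
  have hB : Tendsto (fun k : ℕ => (α * k + β - 1) ^ α) atTop atTop :=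
    (tendsto_rpow_atTop hα).comp (tendsto_atTop_add_const_right _ (-1) hA |>.congr
      (fun k => by ring))
  filter_upwards [hA.eventually_ge_atTop 2, hB.eventually_ge_atTop (4 * (‖z‖ + 1)),
    eventually_ge_atTop ⌈|γ|⌉₊] with k h1 h2 h3
  set x : ℝ := α * k + β with hxdef
  have hG : 0 < Real.Gamma x := Real.Gamma_pos_of_pos (by linarith)
  have hG' : 0 < Real.Gamma (x + α) := Real.Gamma_pos_of_pos (by linarith)
  have hGG : 4 * (‖z‖ + 1) * Real.Gamma x ≤ Real.Gamma (x + α) := by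
    have := gamma_ratio α x hα h1
    nlinarith [h2, hG]
  have hxk1 : α * ((k + 1 : ℕ) : ℝ) + β = x + α := by push_cast; ring
  have hpoch : poch γ (k + 1) = poch γ k * (γ + k) := Finset.prod_range_succ _ _
  have hγ : |γ| ≤ (k : ℝ) := Nat.ceil_le.mp h3
  have hγk : |γ + (k : ℝ)| ≤ 2 * ((k : ℝ) + 1) := by
    calc |γ + (k:ℝ)| ≤ |γ| + |(k:ℝ)| := abs_add_le _ _
      _ ≤ 2 * ((k:ℝ) + 1) := by rw [abs_of_nonneg (by positivity : (0:ℝ) ≤ (k:ℝ))]; linarith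
  -- norms
  have hF : (0:ℝ) < (Nat.factorial k : ℝ) := by positivity
  have hnorm : ∀ (p g : ℝ) (m : ℕ), ‖((p / ((Nat.factorial m : ℝ) * g) : ℝ) : ℂ) * z ^ m‖
      = |p| / ((Nat.factorial m : ℝ) * |g|) * ‖z‖ ^ m := by
    intro p g m
    rw [norm_mul, Complex.norm_real, norm_pow, Real.norm_eq_abs, abs_div, abs_mul,
      Nat.abs_cast]
  rw [hnorm, hnorm, hxk1, hpoch, abs_of_pos hG, abs_of_pos hG', abs_mul,
    Nat.factorial_succ]
  push_cast
  have hzk : (0:ℝ) ≤ ‖z‖ ^ k := by positivity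
  have hz0 : (0:ℝ) ≤ ‖z‖ := norm_nonneg z
  have hP : (0:ℝ) ≤ |poch γ k| := abs_nonneg _
  rw [pow_succ]
  rw [show (1:ℝ)/2 * (|poch γ k| / ((Nat.factorial k : ℝ) * Real.Gamma x) * ‖z‖ ^ k)
      = (|poch γ k| * ‖z‖ ^ k) / (2 * ((Nat.factorial k : ℝ) * Real.Gamma x)) from by ring,
    div_mul_eq_mul_div, div_le_div_iff₀ (by positivity) (by positivity)]
  have key : 2 * (|γ + (k:ℝ)| * (‖z‖ * Real.Gamma x)) ≤ ((k:ℝ) + 1) * Real.Gamma (x + α) := by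
    nlinarith [hγk, hGG, hG.le, hz0,
      mul_le_mul_of_nonneg_left hGG (show (0:ℝ) ≤ (k:ℝ)+1 by positivity),
      mul_le_mul_of_nonneg_right hγk (mul_nonneg hz0 hG.le),
      mul_nonneg (show (0:ℝ) ≤ (k:ℝ)+1 by positivity) hG.le]
  nlinarith [mul_le_mul_of_nonneg_left key
    (show (0:ℝ) ≤ |poch γ k| * ‖z‖ ^ k * (Nat.factorial k : ℝ) by positivity)]

/-- The second reduction formula
`αγ z E_{α,β}^{γ+1}(z) = E_{α,β-α-1}^γ(z) + (1-β+α) E_{α,β-α}^γ(z)` for `z ≠ 0`,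
where `α > 0` and `γ ≠ 0`. -/
theorem prabhakar_reduction_two (α β γ : ℝ) (hα : 0 < α) (hγ : γ ≠ 0)
    (z : ℂ) (hz : z ≠ 0) :
    ((α * γ : ℝ) : ℂ) * z * prabhakar α β (γ + 1) z =
      prabhakar α (β - α - 1) γ z + ((1 - β + α : ℝ) : ℂ) * prabhakar α (β - α) γ z := by
  set d : ℕ → ℂ := fun k =>
    ((α * k * poch γ k / (Nat.factorial k * Real.Gamma (α * k + (β - α))) : ℝ) : ℂ) * z ^ k
    with hd
  have hlhs : ((α * γ : ℝ) : ℂ) * z * prabhakar α β (γ + 1) z = ∑' k : ℕ, d (k + 1) := by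
    unfold prabhakar
    rw [mul_assoc, ← tsum_mul_left, ← tsum_mul_left]
    apply tsum_congr
    intro k
    have hre : α * γ * (poch (γ + 1) k / (Nat.factorial k * Real.Gamma (α * k + β)))
        = α * (k + 1 : ℕ) * poch γ (k + 1)
          / (Nat.factorial (k + 1) * Real.Gamma (α * (k + 1 : ℕ) + (β - α))) := by
      rw [poch_succ', Nat.factorial_succ]
      push_cast
      have harg : α * ((k : ℝ) + 1) + (β - α) = α * k + β := by ring
      rw [harg]
      rw [show α * ((k:ℝ) + 1) * (poch (γ+1) k * γ) = ((k:ℝ)+1) * (α * γ * poch (γ+1) k)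
          from by ring,
        show ((k:ℝ)+1) * (Nat.factorial k : ℝ) * Real.Gamma (α * k + β)
          = ((k:ℝ)+1) * ((Nat.factorial k : ℝ) * Real.Gamma (α * k + β)) from by ring,
        mul_div_mul_left _ _ (show ((k:ℝ)+1) ≠ 0 by positivity)]
      ring
    calc ((α * γ : ℝ) : ℂ) * (z * (((poch (γ+1) k / (Nat.factorial k * Real.Gamma (α * k + β)) : ℝ) : ℂ) * z ^ k))
        = ((α * γ * (poch (γ+1) k / (Nat.factorial k * Real.Gamma (α * k + β))) : ℝ) : ℂ) * z ^ (k+1) := by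
          push_cast; ring
      _ = d (k + 1) := by
          rw [hre, hd]
  have hshift : ∑' k : ℕ, d (k + 1) = ∑' k : ℕ, d k := by
    apply Function.Injective.tsum_eq (g := fun k : ℕ => k + 1)
    · intro a b h; simpa using h
    · intro n hn
      rcases n with _ | m
      · exfalso
        apply hn
        simp [hd]
      · exact ⟨m, rfl⟩
  have ha := summable_prab α (β - α - 1) γ hα z
  have hb := summable_prab α (β - α) γ hα z
  rw [hlhs, hshift]
  unfold prabhakar
  rw [← tsum_mul_left, ← Summable.tsum_add ha (hb.mul_left _)]
  apply tsum_congr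
  intro k
  have key : poch γ k / (Nat.factorial k * Real.Gamma (α * k + (β - α - 1)))
      + (1 - β + α) * (poch γ k / (Nat.factorial k * Real.Gamma (α * k + (β - α))))
      = α * k * poch γ k / (Nat.factorial k * Real.Gamma (α * k + (β - α))) := by
    have hx : α * k + (β - α - 1) = (α * k + (β - α)) - 1 := by ring
    have h1 : poch γ k / (Nat.factorial k * Real.Gamma (α * k + (β - α - 1)))
        = (poch γ k * ((α * k + (β - α)) - 1))
          / (Nat.factorial k * Real.Gamma (α * k + (β - α))) := by
      rw [hx, div_mul_eq_div_div, div_eq_mul_one_div (poch γ k / _), gamma_shift,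
        div_mul_div_comm]
    rw [h1, ← mul_div_assoc, ← add_div]
    congr 1
    ring
  rw [hd]
  push_cast [← key]
  ring
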